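/- Let M be a d×d real matrix, γ > 0, and let w = u + i v ∈ ℂ^d (u, v ∈ ℝ^d, |u|² + |v|² = 1) be a unit eigenvector of M with eigenvalue z = a + i b (a, b ∈ ℝ). Then ⟨K_M w, w⟩_ℂ = ⟨K_M u, u⟩ + ⟨K_M v, v⟩ = γ² a − b², where ⟨·,·⟩_ℂ is the Hermitian inner product on ℂ^d. -/
import Mathlib


open Matrix

/-- Lemma 3.2-(1). If `w = u + iv` is a unit eigenvector of `M` with
eigenvalue `z = a + ib`, then `⟨K_M w, w⟩_ℂ = ⟨K_M u, u⟩ + ⟨K_M v, v⟩ = γ² a − b²`,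
where `K_M = γ² Mˢ + (Mᵃ)² + ½(Mᵃ Mˢ − Mˢ Mᵃ)`. -/
theorem stmt2 (d : ℕ) (hd : 1 ≤ d) (γ : ℝ) (hγ : 0 < γ)
    (M Ms Ma K : Matrix (Fin d) (Fin d) ℝ)
    (hMs : Ms = (1 / 2 : ℝ) • (M + Mᵀ))
    (hMa : Ma = (1 / 2 : ℝ) • (M - Mᵀ))
    (hK : K = γ ^ 2 • Ms + Ma * Ma + (1 / 2 : ℝ) • (Ma * Ms - Ms * Ma))
    (a b : ℝ) (u v : Fin d → ℝ)
    (hunit : (∑ i, u i ^ 2) + (∑ i, v i ^ 2) = 1)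
    (w : Fin d → ℂ) (hw : w = fun i => (u i : ℂ) + (v i : ℂ) * Complex.I)
    (heig : (M.map Complex.ofReal).mulVec w = ((a : ℂ) + (b : ℂ) * Complex.I) • w) :
    star w ⬝ᵥ (K.map Complex.ofReal).mulVec w = ((γ ^ 2 * a - b ^ 2 : ℝ) : ℂ) ∧
      K.mulVec u ⬝ᵥ u + K.mulVec v ⬝ᵥ v = γ ^ 2 * a - b ^ 2 := by
  -- real and imaginary parts of the eigenvalue equation
  have h2 : ∀ i, (∑ j, M i j * u j = a * u i - b * v i) ∧
      (∑ j, M i j * v j = b * u i + a * v i) := by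
    intro i
    have h := congrFun heig i
    simp only [hw, Matrix.mulVec, dotProduct, Matrix.map_apply, Pi.smul_apply,
      smul_eq_mul] at h
    have hre := congrArg Complex.re h
    have him := congrArg Complex.im h
    simp only [Complex.re_sum, Complex.im_sum, Complex.add_re, Complex.add_im, Complex.mul_re,
      Complex.mul_im, Complex.I_re, Complex.I_im, Complex.ofReal_re, Complex.ofReal_im,
      mul_zero, zero_mul, mul_one, sub_zero, add_zero, zero_add, zero_sub] at hre him
    exact ⟨by linarith [hre], by linarith [him]⟩
  have hMu : M *ᵥ u = a • u - b • v := by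
    funext i; simpa [Matrix.mulVec, dotProduct] using (h2 i).1
  have hMv : M *ᵥ v = b • u + a • v := by
    funext i; simpa [Matrix.mulVec, dotProduct] using (h2 i).2
  -- basic transpose facts
  have shift : ∀ (A : Matrix (Fin d) (Fin d) ℝ) (x y : Fin d → ℝ),
      (A *ᵥ x) ⬝ᵥ y = x ⬝ᵥ (Aᵀ *ᵥ y) := by
    intro A x y
    rw [mulVec_transpose, dotProduct_comm, dotProduct_mulVec, dotProduct_comm]
  have hMsT : Msᵀ = Ms := by
    rw [hMs, transpose_smul, transpose_add, transpose_transpose, add_comm]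
  have hMaT : Maᵀ = -Ma := by
    rw [hMa, transpose_smul, transpose_sub, transpose_transpose, ← smul_neg, neg_sub]
  have hMsum : Ms + Ma = M := by
    rw [hMs, hMa]; ext i j
    simp [Matrix.add_apply, Matrix.sub_apply, Matrix.smul_apply]
    ring
  have hKsymm : Kᵀ = K := by
    rw [hK]
    simp only [transpose_add, transpose_smul, transpose_sub, transpose_mul, hMsT, hMaT,
      neg_mul, mul_neg, neg_neg, sub_neg_eq_add]
    abel
  have skew : ∀ y z : Fin d → ℝ, (Ma *ᵥ y) ⬝ᵥ z = -(y ⬝ᵥ (Ma *ᵥ z)) := by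
    intro y z
    rw [shift, hMaT, Matrix.neg_mulVec, dotProduct_neg]
  have symm : ∀ y z : Fin d → ℝ, (Ms *ᵥ y) ⬝ᵥ z = y ⬝ᵥ (Ms *ᵥ z) := by
    intro y z; rw [shift, hMsT]
  -- the quadratic form of K
  have quad : ∀ x : Fin d → ℝ, K *ᵥ x ⬝ᵥ x =
      γ ^ 2 * (x ⬝ᵥ (M *ᵥ x)) - (1/2) * ((M *ᵥ x) ⬝ᵥ (M *ᵥ x))
        + (1/2) * (x ⬝ᵥ (M *ᵥ (M *ᵥ x))) := by
    intro x
    have e1 : K *ᵥ x = γ ^ 2 • (Ms *ᵥ x) + Ma *ᵥ (Ma *ᵥ x)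
        + (1/2 : ℝ) • (Ma *ᵥ (Ms *ᵥ x) - Ms *ᵥ (Ma *ᵥ x)) := by
      rw [hK]
      simp [Matrix.add_mulVec, Matrix.sub_mulVec, Matrix.smul_mulVec,
        ← Matrix.mulVec_mulVec]
    have hMax : Ma *ᵥ x = M *ᵥ x - Ms *ᵥ x := by
      rw [← hMsum, Matrix.add_mulVec]; abel
    have hMsx : (Ms *ᵥ x) ⬝ᵥ (M *ᵥ x) = (1/2) * ((M *ᵥ x) ⬝ᵥ (M *ᵥ x))
        + (1/2) * (x ⬝ᵥ (M *ᵥ (M *ᵥ x))) := by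
      rw [hMs, Matrix.smul_mulVec, Matrix.add_mulVec, smul_dotProduct, add_dotProduct,
        shift Mᵀ, transpose_transpose, smul_eq_mul]
      ring
    have t1 : (Ms *ᵥ x) ⬝ᵥ x = x ⬝ᵥ (M *ᵥ x) := by
      rw [symm, hMs, Matrix.smul_mulVec, Matrix.add_mulVec, dotProduct_smul,
        dotProduct_add, ← shift M, dotProduct_comm (M *ᵥ x) x, smul_eq_mul]
      ring
    have t2 := skew (Ma *ᵥ x) x
    have t3 := skew (Ms *ᵥ x) x
    have t4 := symm (Ma *ᵥ x) x
    rw [e1, add_dotProduct, add_dotProduct, smul_dotProduct, smul_dotProduct, sub_dotProduct,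
      t1, t2, t3, t4, smul_eq_mul, smul_eq_mul, hMax]
    simp only [sub_dotProduct, dotProduct_sub]
    have hc : (M *ᵥ x) ⬝ᵥ (Ms *ᵥ x) = (Ms *ᵥ x) ⬝ᵥ (M *ᵥ x) := dotProduct_comm _ _
    linarith [hMsx, hc]
  -- the second conjunct
  have hαβ : u ⬝ᵥ u + v ⬝ᵥ v = 1 := by
    simpa [dotProduct, sq] using hunit
  have main2 : K *ᵥ u ⬝ᵥ u + K *ᵥ v ⬝ᵥ v = γ ^ 2 * a - b ^ 2 := by
    have hMMu : M *ᵥ (M *ᵥ u) = a • (a • u - b • v) - b • (b • u + a • v) := by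
      rw [hMu, Matrix.mulVec_sub, Matrix.mulVec_smul, Matrix.mulVec_smul, hMu, hMv]
    have hMMv : M *ᵥ (M *ᵥ v) = b • (a • u - b • v) + a • (b • u + a • v) := by
      rw [hMv, Matrix.mulVec_add, Matrix.mulVec_smul, Matrix.mulVec_smul, hMu, hMv]
    rw [quad u, quad v, hMMu, hMMv, hMu, hMv]
    simp only [dotProduct_sub, dotProduct_add, dotProduct_smul, sub_dotProduct, add_dotProduct,
      smul_dotProduct, smul_eq_mul]
    rw [dotProduct_comm v u]
    linear_combination (γ ^ 2 * a - b ^ 2) * hαβ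
  refine ⟨?_, main2⟩
  -- expand the complex quadratic form
  have hsw : star w = fun i => ((u i : ℂ) - (v i : ℂ) * Complex.I) := by
    funext i
    simp [hw, Pi.star_apply, Complex.ext_iff]
  have hKw : (K.map Complex.ofReal) *ᵥ w
      = fun i => (((K *ᵥ u) i : ℝ) : ℂ) + (((K *ᵥ v) i : ℝ) : ℂ) * Complex.I := by
    funext i
    simp only [hw, Matrix.mulVec, dotProduct, Matrix.map_apply]
    push_cast
    rw [Finset.sum_mul, ← Finset.sum_add_distrib]
    exact Finset.sum_congr rfl fun j _ => by ring
  have hsym2 : u ⬝ᵥ (K *ᵥ v) = v ⬝ᵥ (K *ᵥ u) := by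
    rw [dotProduct_comm, shift, hKsymm, dotProduct_comm]
  have hexp : star w ⬝ᵥ (K.map Complex.ofReal) *ᵥ w
      = ((K *ᵥ u ⬝ᵥ u + K *ᵥ v ⬝ᵥ v : ℝ) : ℂ)
        + ((u ⬝ᵥ (K *ᵥ v) - v ⬝ᵥ (K *ᵥ u) : ℝ) : ℂ) * Complex.I := by
    rw [hsw, hKw]
    simp only [dotProduct]
    push_cast
    rw [sub_mul, Finset.sum_mul, Finset.sum_mul, ← Finset.sum_add_distrib,
      ← Finset.sum_sub_distrib, ← Finset.sum_add_distrib]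
    · exact Finset.sum_congr rfl fun j _ => by
        have hI := Complex.I_mul_I
        linear_combination (-(v j : ℂ) * ((K *ᵥ v) j : ℂ)) * hI
  rw [hexp, hsym2, sub_self, main2]
  simp
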